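/- Let κ be an infinite cardinal, X a Banach space, and x* a norm-one functional on X. Then the character of x* in the dual ball B_{X*} with the weak* topology is at most κ if and only if there is a closed subspace Y of X of density at most κ such that x* is the unique norm-one functional on X extending x*|Y. -/

import Mathlib

open Cardinal Set

universe u

/-- The density character of a topological space: the least cardinality of a dense subset. -/
noncomputable def dens (X : Type u) [TopologicalSpace X] : Cardinal.{u} :=
  ⨅ s : {s : Set X // Dense s}, Cardinal.mk ↥(s.1)

/-- A set is linearly dense if its closed linear span is the whole space. -/
def LinearlyDense {X : Type u} [NormedAddCommGroup X] [NormedSpace ℝ X] (S : Set X) : Prop :=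
  (Submodule.span ℝ S).topologicalClosure = ⊤

/-- A set `Y` is overcomplete in `X` if `|Y| = dens X` and every subset of `Y` of full
cardinality is linearly dense in `X`. -/
def Overcomplete {X : Type u} [NormedAddCommGroup X] [NormedSpace ℝ X] (Y : Set X) : Prop :=
  Cardinal.mk ↥Y = dens X ∧ ∀ Z ⊆ Y, Cardinal.mk ↥Z = Cardinal.mk ↥Y → LinearlyDense Z

/-- The character of the point `x` relative to the subspace `A ⊆ T` (with the subspace
topology): the least cardinality of a family `B` of open neighbourhoods of `x` such that
every open neighbourhood of `x` contains some `V ∩ A` with `V ∈ B`. -/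
noncomputable def relChar {T : Type u} [TopologicalSpace T] (A : Set T) (x : T) : Cardinal.{u} :=
  sInf {c | ∃ B : Set (Set T), Cardinal.mk ↥B = c ∧ (∀ V ∈ B, x ∈ V ∧ IsOpen V) ∧
    ∀ U : Set T, IsOpen U → x ∈ U → ∃ V ∈ B, V ∩ A ⊆ U}

/-- The closed unit ball of the dual of `X`, as a subset of the weak* dual. -/
def dualBall (X : Type u) [NormedAddCommGroup X] [NormedSpace ℝ X] : Set (WeakDual ℝ X) :=
  {φ | ‖WeakDual.toStrongDual φ‖ ≤ 1}

section Aux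

variable {X : Type u} [NormedAddCommGroup X] [NormedSpace ℝ X]

/-- A norm-`≤ 1` functional agreeing with a unique-norm-one-extension functional on `Y`
coincides with it. -/
lemma agree_of_le_one (xs : X →L[ℝ] ℝ) (hxs : ‖xs‖ = 1) (Y : Submodule ℝ X)
    (huniq : ∀ ψ : X →L[ℝ] ℝ, ‖ψ‖ = 1 → (∀ y ∈ Y, ψ y = xs y) → ψ = xs)
    (φ : X →L[ℝ] ℝ) (hφ : ‖φ‖ ≤ 1) (hagree : ∀ y ∈ Y, φ y = xs y) : φ = xs := by
  by_contra hne
  set d : X →L[ℝ] ℝ := xs - φ with hd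
  have hd0 : d ≠ 0 := sub_ne_zero.2 fun h => hne h.symm
  have hdn : 0 < ‖d‖ := norm_pos_iff.2 hd0
  have hdn' : 0 < 2 / ‖d‖ := by positivity
  set T : ℝ := 1 + 2 / ‖d‖ with hT
  have hT1 : 1 ≤ T := by rw [hT]; linarith
  have hcont : Continuous fun t : ℝ => ‖xs + t • d‖ :=
    (continuous_const.add (continuous_id.smul continuous_const)).norm
  have hb : ‖xs + (-1 : ℝ) • d‖ ≤ 1 := by
    have : xs + (-1 : ℝ) • d = φ := by rw [hd]; module
    rw [this]; exact hφ
  have ha : 1 ≤ ‖xs + (-T : ℝ) • d‖ := by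
    have h2 : ‖(-T : ℝ) • d‖ = ‖(xs + (-T : ℝ) • d) - xs‖ := by congr 1; abel
    have h1 : ‖(-T : ℝ) • d‖ ≤ ‖xs + (-T : ℝ) • d‖ + ‖xs‖ := h2 ▸ norm_sub_le _ _
    have h3 : ‖(-T : ℝ) • d‖ = T * ‖d‖ := by
      rw [norm_smul (-T) d, Real.norm_eq_abs, abs_neg,
        abs_of_pos (by linarith : (0:ℝ) < T)]
    have h4 : 2 ≤ T * ‖d‖ := by
      rw [hT, add_mul, div_mul_cancel₀ _ (ne_of_gt hdn)]
      nlinarith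
    rw [hxs, h3] at h1; linarith
  have hmem : (1:ℝ) ∈ Icc ‖xs + (-1:ℝ) • d‖ ‖xs + (-T:ℝ) • d‖ := ⟨hb, ha⟩
  obtain ⟨t₀, ht₀, hN⟩ := intermediate_value_Icc' (by linarith : -T ≤ -1)
    (hcont.continuousOn) hmem
  have hagree' : ∀ y ∈ Y, (xs + t₀ • d) y = xs y := by
    intro y hy
    simp [hd, ContinuousLinearMap.add_apply, ContinuousLinearMap.smul_apply,
      ContinuousLinearMap.sub_apply, hagree y hy]
  have heq := huniq (xs + t₀ • d) hN hagree'
  have ht0 : t₀ • d = 0 := add_eq_left.mp heq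
  have htne : t₀ ≠ 0 := by intro h; rw [h] at ht₀; exact absurd ht₀.2 (by norm_num)
  have : d = 0 := by
    have : d = t₀⁻¹ • (t₀ • d) := by rw [smul_smul, inv_mul_cancel₀ htne, one_smul]
    rw [this, ht0, smul_zero]
  exact hd0 this

/-- Finite rational combinations of elements of `S`. -/
def ratCombos (S : Set X) : Set X :=
  Set.range fun l : List (ULift.{u} ℚ × ↥S) =>
    (l.map fun p => ((p.1.down : ℝ)) • (p.2 : X)).sum

lemma ratCombos_subset_span (S : Set X) : ratCombos S ⊆ (Submodule.span ℝ S : Set X) := by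
  rintro x ⟨l, rfl⟩
  induction l with
  | nil => simp [Submodule.zero_mem]
  | cons p l ih =>
    simp only [List.map_cons, List.sum_cons]
    exact Submodule.add_mem _
      (Submodule.smul_mem _ _ (Submodule.subset_span p.2.2)) ih

lemma mk_ratCombos_le (S : Set X) {κ : Cardinal.{u}} (hκ : Cardinal.aleph0 ≤ κ)
    (hS : #↥S ≤ κ) : #↥(ratCombos S) ≤ κ := by
  have h1 : #↥(ratCombos S) ≤ #(List (ULift.{u} ℚ × ↥S)) := Cardinal.mk_range_le
  have h2 : #(List (ULift.{u} ℚ × ↥S)) ≤ max ℵ₀ #(ULift.{u} ℚ × ↥S) :=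
    Cardinal.mk_list_le_max _
  have h3 : #(ULift.{u} ℚ × ↥S) ≤ κ := by
    rw [Cardinal.mk_prod]
    calc Cardinal.lift.{u,u} #(ULift.{u} ℚ) * Cardinal.lift.{u,u} #↥S ≤ κ * κ := by
          apply mul_le_mul'
          · simpa using hκ
          · simpa using hS
      _ = κ := Cardinal.mul_eq_self hκ
  exact h1.trans (h2.trans (max_le hκ h3))

lemma zero_mem_ratCombos (S : Set X) : (0 : X) ∈ ratCombos S := ⟨[], by simp⟩

lemma add_mem_ratCombos {S : Set X} {x y : X} (hx : x ∈ ratCombos S)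
    (hy : y ∈ ratCombos S) : x + y ∈ ratCombos S := by
  obtain ⟨l1, rfl⟩ := hx
  obtain ⟨l2, rfl⟩ := hy
  exact ⟨l1 ++ l2, by simp⟩

lemma ratSmul_mem_ratCombos {S : Set X} (q : ℚ) {x : X} (hx : x ∈ ratCombos S) :
    (q : ℝ) • x ∈ ratCombos S := by
  obtain ⟨l, rfl⟩ := hx
  refine ⟨l.map fun p => (⟨q * p.1.down⟩, p.2), ?_⟩
  dsimp only
  rw [List.smul_sum, List.map_map, List.map_map]
  congr 1
  refine List.map_congr_left fun p _ => ?_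
  show ((q * p.1.down : ℚ) : ℝ) • (p.2 : X) = (q:ℝ) • ((p.1.down : ℝ) • (p.2 : X))
  rw [smul_smul]
  push_cast
  ring_nf

lemma span_subset_closure_ratCombos (S : Set X) :
    (Submodule.span ℝ S : Set X) ⊆ closure (ratCombos S) := by
  intro x hx
  induction hx using Submodule.span_induction with
  | mem x h => exact subset_closure ⟨[(⟨1⟩, ⟨x, h⟩)], by simp⟩
  | zero => exact subset_closure (zero_mem_ratCombos S)
  | add x y hx hy ihx ihy =>
    have : MapsTo (fun p : X × X => p.1 + p.2) (ratCombos S ×ˢ ratCombos S) (ratCombos S) :=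
      fun p hp => add_mem_ratCombos hp.1 hp.2
    have hcl := this.closure (continuous_fst.add continuous_snd)
    have : (x, y) ∈ closure (ratCombos S ×ˢ ratCombos S) := by
      rw [closure_prod_eq]; exact ⟨ihx, ihy⟩
    exact hcl this
  | smul r x hx ihx =>
    have hq : ∀ q : ℚ, (q : ℝ) • x ∈ closure (ratCombos S) := by
      intro q
      have : MapsTo (fun y : X => (q : ℝ) • y) (ratCombos S) (ratCombos S) :=
        fun y hy => ratSmul_mem_ratCombos q hy
      exact this.closure (continuous_const_smul _) ihx
    have hcont : Continuous fun t : ℝ => t • x := continuous_id.smul continuous_const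
    have hr : r ∈ closure (Set.range ((↑) : ℚ → ℝ)) := by
      rw [Rat.denseRange_cast.closure_eq]; trivial
    have : r • x ∈ closure ((fun t : ℝ => t • x) '' Set.range ((↑) : ℚ → ℝ)) :=
      (image_closure_subset_closure_image hcont) ⟨r, hr, rfl⟩
    refine closure_minimal ?_ isClosed_closure this
    rintro _ ⟨_, ⟨q, rfl⟩, rfl⟩
    exact hq q

lemma dens_le_of_dense {Z : Type u} [TopologicalSpace Z] {s : Set Z} (hs : Dense s) :
    dens Z ≤ #↥s := ciInf_le (OrderBot.bddBelow _) (⟨s, hs⟩ : {s : Set Z // Dense s})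

lemma exists_dense_card_eq (Z : Type u) [TopologicalSpace Z] :
    ∃ s : Set Z, Dense s ∧ #↥s = dens Z := by
  have hne : (Set.range fun s : {s : Set Z // Dense s} => #↥(s.1)).Nonempty :=
    ⟨#↥(Set.univ : Set Z), ⟨⟨Set.univ, dense_univ⟩, rfl⟩⟩
  obtain ⟨⟨s, hs⟩, h⟩ := csInf_mem hne
  exact ⟨s, hs, h⟩

lemma dense_preimage_val {C D : Set X} (hDC : D ⊆ C) (hCD : C ⊆ closure D) :
    Dense (Subtype.val ⁻¹' D : Set ↥C) := by
  intro x
  rw [closure_subtype, Subtype.image_preimage_coe, Set.inter_eq_right.mpr hDC]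
  exact hCD x.2

/-- The density of the closure of the span of a set of cardinality at most `κ` is
at most `κ`. -/
lemma dens_closure_span_le (S : Set X) {κ : Cardinal.{u}} (hκ : Cardinal.aleph0 ≤ κ)
    (hS : #↥S ≤ κ) : dens ↥((Submodule.span ℝ S).topologicalClosure) ≤ κ := by
  set C : Set X := ((Submodule.span ℝ S).topologicalClosure : Set X) with hC
  have hCcl : C = closure ((Submodule.span ℝ S : Set X)) := by
    rw [hC]; rfl
  have hDC : ratCombos S ⊆ C := by
    rw [hCcl]
    exact (ratCombos_subset_span S).trans subset_closure
  have hCD : C ⊆ closure (ratCombos S) := by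
    rw [hCcl]
    exact closure_minimal (span_subset_closure_ratCombos S) isClosed_closure
  have hdense : Dense (Subtype.val ⁻¹' ratCombos S : Set ↥C) := dense_preimage_val hDC hCD
  have h1 : dens ↥((Submodule.span ℝ S).topologicalClosure) ≤
      #↥(Subtype.val ⁻¹' ratCombos S : Set ↥C) := dens_le_of_dense hdense
  refine h1.trans (le_trans ?_ (mk_ratCombos_le S hκ hS))
  exact Cardinal.mk_preimage_of_injective _ _ Subtype.val_injective

end Aux

set_option maxHeartbeats 1600000 in
/-- for a norm-one functional `x*`, its character in the weak* dual ball is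
`≤ κ` iff there is a closed subspace `Y ⊆ X` of density `≤ κ` such that `x*` is the unique
norm-one functional extending its restriction to `Y`. -/
theorem stmt7 {X : Type u} [NormedAddCommGroup X] [NormedSpace ℝ X] [CompleteSpace X]
    (κ : Cardinal.{u}) (hκ : Cardinal.aleph0 ≤ κ)
    (xs : X →L[ℝ] ℝ) (hxs : ‖xs‖ = 1) :
    relChar (dualBall X) (StrongDual.toWeakDual xs) ≤ κ ↔
      ∃ Y : Submodule ℝ X, IsClosed (Y : Set X) ∧ dens Y ≤ κ ∧
        ∀ φ : X →L[ℝ] ℝ, ‖φ‖ = 1 → (∀ y ∈ Y, φ y = xs y) → φ = xs := by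
  constructor
  · -- forward direction
    intro h
    set xw : WeakDual ℝ X := StrongDual.toWeakDual xs with hxw
    have hne : {c | ∃ B : Set (Set (WeakDual ℝ X)), Cardinal.mk ↥B = c ∧
        (∀ V ∈ B, xw ∈ V ∧ IsOpen V) ∧
        ∀ U : Set (WeakDual ℝ X), IsOpen U → xw ∈ U →
          ∃ V ∈ B, V ∩ dualBall X ⊆ U}.Nonempty := by
      refine ⟨_, {V : Set (WeakDual ℝ X) | xw ∈ V ∧ IsOpen V}, rfl, fun V hV => hV, ?_⟩
      intro U hU hx
      exact ⟨U, ⟨hx, hU⟩, Set.inter_subset_left⟩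
    obtain ⟨B, hBcard, hBopen, hBbase⟩ := csInf_mem hne
    have hBle : #↥B ≤ κ := hBcard.trans_le h
    -- extract finite determining sets
    have key : ∀ V : ↥B, ∃ F : Finset X,
        ∀ φ : WeakDual ℝ X, (∀ x ∈ F, φ x = xs x) → φ ∈ (V : Set (WeakDual ℝ X)) := by
      rintro ⟨V, hV⟩
      obtain ⟨hxV, hVopen⟩ := hBopen V hV
      change @IsOpen _ (TopologicalSpace.induced (fun (φ : WeakDual ℝ X) (x : X) => φ x)
        Pi.topologicalSpace) V at hVopen
      rw [isOpen_induced_iff] at hVopen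
      obtain ⟨W, hW, hVW⟩ := hVopen
      have hxsW : (fun x : X => xw x) ∈ W := by
        rw [← hVW] at hxV; exact hxV
      rw [isOpen_pi_iff] at hW
      obtain ⟨I, uu, hu, hsub⟩ := hW _ hxsW
      refine ⟨I, fun φ hφ => ?_⟩
      have hmemW : (fun x : X => φ x) ∈ W := by
        apply hsub
        intro i hi
        show φ i ∈ uu i
        rw [hφ i hi]
        exact (hu i hi).2
      show φ ∈ V
      rw [← hVW]
      exact hmemW
    choose F hF using key
    set S : Set X := ⋃ V : ↥B, ((F V : Finset X) : Set X) with hS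
    have hSle : #↥S ≤ κ := by
      have h1 : #↥S ≤ #↥B * ⨆ V : ↥B, #↥((F V : Finset X) : Set X) :=
        Cardinal.mk_iUnion_le _
      have h2 : (⨆ V : ↥B, #↥((F V : Finset X) : Set X)) ≤ ℵ₀ := by
        apply ciSup_le'
        intro V
        exact le_of_lt (Cardinal.lt_aleph0_of_finite _)
      calc #↥S ≤ #↥B * ℵ₀ := h1.trans (mul_le_mul' le_rfl h2)
        _ ≤ κ * κ := mul_le_mul' hBle hκ
        _ = κ := Cardinal.mul_eq_self hκ
    refine ⟨(Submodule.span ℝ S).topologicalClosure,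
      Submodule.isClosed_topologicalClosure _, dens_closure_span_le S hκ hSle, ?_⟩
    intro φ hφnorm hφagree
    by_contra hphne
    have hwne : StrongDual.toWeakDual φ ≠ xw := by
      intro hcontra
      exact hphne (StrongDual.toWeakDual.injective hcontra)
    have hSY : S ⊆ ((Submodule.span ℝ S).topologicalClosure : Set X) := fun x hx =>
      Submodule.le_topologicalClosure _ (Submodule.subset_span hx)
    have hφS : ∀ V : ↥B, (StrongDual.toWeakDual φ : WeakDual ℝ X) ∈
        (V : Set (WeakDual ℝ X)) := by
      intro V
      apply hF V
      intro x hx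
      exact hφagree x (hSY (Set.mem_iUnion.2 ⟨V, hx⟩))
    have hUopen : IsOpen ({StrongDual.toWeakDual φ}ᶜ : Set (WeakDual ℝ X)) :=
      isOpen_compl_singleton
    have hxU : xw ∈ ({StrongDual.toWeakDual φ}ᶜ : Set (WeakDual ℝ X)) := by
      simp only [Set.mem_compl_iff, Set.mem_singleton_iff]
      exact fun hh => hwne hh.symm
    obtain ⟨V, hVB, hVsub⟩ := hBbase _ hUopen hxU
    have hball : (StrongDual.toWeakDual φ : WeakDual ℝ X) ∈ dualBall X := by
      show ‖WeakDual.toStrongDual (StrongDual.toWeakDual φ)‖ ≤ 1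
      rw [show WeakDual.toStrongDual (StrongDual.toWeakDual φ) = φ from rfl, hφnorm]
    have := hVsub ⟨hφS ⟨V, hVB⟩, hball⟩
    simp at this
  · -- backward direction
    rintro ⟨Y, hYclosed, hYdens, huniq⟩
    set xw : WeakDual ℝ X := StrongDual.toWeakDual xs with hxw
    obtain ⟨s₀, hs₀dense, hs₀card⟩ := exists_dense_card_eq ↥Y
    set D : Set X := Subtype.val '' s₀ with hD
    have hDcard : #↥D ≤ κ := le_trans Cardinal.mk_image_le (by rw [hs₀card]; exact hYdens)
    have hYD : (Y : Set X) ⊆ closure D := by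
      intro y hy
      have hde := hs₀dense ⟨y, hy⟩
      rw [closure_subtype] at hde
      exact hde
    classical
    set V : Finset ↥D × ULift.{u} ℕ → Set (WeakDual ℝ X) := fun i =>
      ⋂ d ∈ i.1, {φ : WeakDual ℝ X | |φ (d : X) - xs (d : X)| < 1 / (i.2.down + 1)} with hV
    have hVopen : ∀ i, IsOpen (V i) := by
      intro i
      apply isOpen_biInter_finset
      intro d _
      have hc : Continuous fun φ : WeakDual ℝ X => φ (d : X) - xs (d : X) :=
        (WeakDual.eval_continuous _).sub continuous_const
      have heq : {φ : WeakDual ℝ X | |φ (d:X) - xs (d:X)| < 1/(i.2.down+1)} =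
          (fun φ : WeakDual ℝ X => φ (d:X) - xs (d:X)) ⁻¹' Metric.ball 0 (1/(i.2.down+1)) := by
        ext φ; simp [Metric.mem_ball, Real.dist_eq]
      rw [heq]
      exact Metric.isOpen_ball.preimage hc
    have hVmem : ∀ i, xw ∈ V i := by
      intro i
      refine Set.mem_iInter₂.2 fun d _ => ?_
      show |xw (d:X) - xs (d:X)| < _
      have hrfl : xw (d:X) = xs (d:X) := rfl
      rw [hrfl, sub_self, abs_zero]
      positivity
    have hbase : ∀ U : Set (WeakDual ℝ X), IsOpen U → xw ∈ U →
        ∃ i, V i ∩ dualBall X ⊆ U := by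
      intro U hU hxU
      by_contra hcon
      push_neg at hcon
      have hsel : ∀ i, ∃ φ : WeakDual ℝ X, φ ∈ V i ∩ dualBall X ∧ φ ∉ U := by
        intro i
        obtain ⟨φ, hφ1, hφ2⟩ := Set.not_subset.1 (hcon i)
        exact ⟨φ, hφ1, hφ2⟩
      set C : Finset ↥D × ULift.{u} ℕ → Set (WeakDual ℝ X) := fun i =>
        (dualBall X ∩ Uᶜ) ∩
          ⋂ d ∈ i.1, {φ : WeakDual ℝ X | |φ (d:X) - xs (d:X)| ≤ 1/(i.2.down+1)} with hC
      have hball_eq : dualBall X = WeakDual.toStrongDual ⁻¹' Metric.closedBall 0 1 := by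
        ext φ
        simp [dualBall, Metric.mem_closedBall, dist_zero_right]
      have hball_closed : IsClosed (dualBall X) := by
        rw [hball_eq]; exact WeakDual.isClosed_closedBall 0 1
      have hball_cpt : IsCompact (dualBall X) := by
        rw [hball_eq]; exact WeakDual.isCompact_closedBall (𝕜 := ℝ) 0 1
      have hCclosed : ∀ i, IsClosed (C i) := by
        intro i
        refine (hball_closed.inter hU.isClosed_compl).inter ?_
        refine isClosed_biInter fun d _ => ?_
        have hc : Continuous fun φ : WeakDual ℝ X => φ (d : X) - xs (d : X) :=
          (WeakDual.eval_continuous _).sub continuous_const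
        have heq : {φ : WeakDual ℝ X | |φ (d:X) - xs (d:X)| ≤ 1/(i.2.down+1)} =
            (fun φ : WeakDual ℝ X => φ (d:X) - xs (d:X)) ⁻¹' Metric.closedBall 0 (1/(i.2.down+1)) := by
          ext φ; simp [Metric.mem_closedBall, Real.dist_eq]
        rw [heq]
        exact Metric.isClosed_closedBall.preimage hc
      have hCsub : ∀ i, C i ⊆ dualBall X := fun i =>
        Set.inter_subset_left.trans Set.inter_subset_left
      have hCcpt : ∀ i, IsCompact (C i) := fun i =>
        hball_cpt.of_isClosed_subset (hCclosed i) (hCsub i)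
      have hCne : ∀ i, (C i).Nonempty := by
        intro i
        obtain ⟨φ, ⟨hφV, hφb⟩, hφU⟩ := hsel i
        refine ⟨φ, ⟨hφb, hφU⟩, ?_⟩
        refine Set.mem_iInter₂.2 fun d hd => ?_
        show |φ (d:X) - xs (d:X)| ≤ _
        exact le_of_lt (Set.mem_iInter₂.1 hφV d hd)
      have hdir : Directed (fun s t : Set (WeakDual ℝ X) => t ⊆ s) C := by
        intro i j
        refine ⟨⟨i.1 ∪ j.1, ⟨max i.2.down j.2.down⟩⟩, ?_, ?_⟩
        · intro φ hφ
          refine ⟨hφ.1, Set.mem_iInter₂.2 fun d hd => ?_⟩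
          have h1 : |φ (d:X) - xs (d:X)| ≤ 1/((max i.2.down j.2.down : ℕ) + 1 : ℝ) :=
            Set.mem_iInter₂.1 hφ.2 d (Finset.mem_union_left _ hd)
          show |φ (d:X) - xs (d:X)| ≤ _
          refine le_trans h1 ?_
          apply one_div_le_one_div_of_le
          · positivity
          · have : (i.2.down : ℝ) ≤ (max i.2.down j.2.down : ℕ) := by
              exact_mod_cast Nat.le_max_left _ _
            linarith
        · intro φ hφ
          refine ⟨hφ.1, Set.mem_iInter₂.2 fun d hd => ?_⟩
          have h1 : |φ (d:X) - xs (d:X)| ≤ 1/((max i.2.down j.2.down : ℕ) + 1 : ℝ) :=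
            Set.mem_iInter₂.1 hφ.2 d (Finset.mem_union_right _ hd)
          show |φ (d:X) - xs (d:X)| ≤ _
          refine le_trans h1 ?_
          apply one_div_le_one_div_of_le
          · positivity
          · have : (j.2.down : ℝ) ≤ (max i.2.down j.2.down : ℕ) := by
              exact_mod_cast Nat.le_max_right _ _
            linarith
      have : Nonempty (Finset ↥D × ULift.{u} ℕ) := ⟨⟨∅, ⟨0⟩⟩⟩
      obtain ⟨φ, hφ⟩ :=
        IsCompact.nonempty_iInter_of_directed_nonempty_isCompact_isClosed C hdir hCne hCcpt hCclosed
      rw [Set.mem_iInter] at hφ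
      have hφball : φ ∈ dualBall X := (hφ ⟨∅, ⟨0⟩⟩).1.1
      have hφU : φ ∉ U := (hφ ⟨∅, ⟨0⟩⟩).1.2
      have hagreeD : ∀ d : ↥D, φ (d:X) = xs (d:X) := by
        intro d
        by_contra hne
        have hpos : 0 < |φ (d:X) - xs (d:X)| := abs_pos.2 (sub_ne_zero.2 hne)
        obtain ⟨n, hn⟩ := exists_nat_one_div_lt hpos
        have h2 := Set.mem_iInter₂.1 (hφ ⟨{d}, ⟨n⟩⟩).2 d (Finset.mem_singleton_self d)
        have : |φ (d:X) - xs (d:X)| ≤ 1/((n:ℝ)+1) := h2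
        linarith
      have hagreeY : ∀ y ∈ Y, (WeakDual.toStrongDual φ) y = xs y := by
        intro y hy
        have hclosedset : IsClosed {x : X | φ x = xs x} :=
          isClosed_eq (map_continuous φ) (map_continuous xs)
        have hsubset : D ⊆ {x : X | φ x = xs x} := fun x hx => hagreeD ⟨x, hx⟩
        exact closure_minimal hsubset hclosedset (hYD hy)
      have heq := agree_of_le_one xs hxs Y huniq (WeakDual.toStrongDual φ) hφball hagreeY
      have heq2 : φ = xw := congrArg StrongDual.toWeakDual heq
      exact hφU (by rw [heq2]; exact hxU)
    have hmemset : #↥(Set.range V) ∈ {c | ∃ B : Set (Set (WeakDual ℝ X)),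
        Cardinal.mk ↥B = c ∧ (∀ W ∈ B, xw ∈ W ∧ IsOpen W) ∧
        ∀ U : Set (WeakDual ℝ X), IsOpen U → xw ∈ U → ∃ W ∈ B, W ∩ dualBall X ⊆ U} := by
      refine ⟨Set.range V, rfl, ?_, ?_⟩
      · rintro W ⟨i, rfl⟩
        exact ⟨hVmem i, hVopen i⟩
      · intro U hU hx
        obtain ⟨i, hi⟩ := hbase U hU hx
        exact ⟨V i, ⟨i, rfl⟩, hi⟩
    refine le_trans (csInf_le' hmemset) ?_
    refine le_trans Cardinal.mk_range_le ?_
    have h1 : #(Finset ↥D) ≤ κ := by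
      have hsurj : Function.Surjective (fun l : List ↥D => l.toFinset) := fun F =>
        ⟨F.toList, by simp⟩
      exact le_trans (Cardinal.mk_le_of_surjective hsurj)
        (le_trans (Cardinal.mk_list_le_max _) (max_le hκ hDcard))
    calc #(Finset ↥D × ULift.{u} ℕ)
        = Cardinal.lift.{u,u} #(Finset ↥D) * Cardinal.lift.{u,u} #(ULift.{u} ℕ) :=
          Cardinal.mk_prod _ _
      _ ≤ κ * κ := by
          apply mul_le_mul'
          · rw [Cardinal.lift_id]; exact h1
          · rw [Cardinal.lift_id]
            have : #(ULift.{u} ℕ) = ℵ₀ := by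
              rw [Cardinal.mk_uLift, Cardinal.mk_nat, Cardinal.lift_aleph0]
            rw [this]; exact hκ
      _ = κ := Cardinal.mul_eq_self hκ
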